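/- For every marking M of a net there exists a reachable marking M' such that every transition is either dead at M' or live at M' (i.e., D_{M'} ∪ L_{M'} = T). -/
import Mathlib


open Classical

/-- A net: flow from places to transitions (`Fpt`) and transitions to places (`Ftp`). -/
structure Net (P T : Type) where
  Fpt : P → T → Prop
  Ftp : T → P → Prop

namespace Net

variable {P T : Type}

/-- Input places of a transition. -/
def preT (N : Net P T) (t : T) : Set P := {p | N.Fpt p t}
/-- Output places of a transition. -/
def postT (N : Net P T) (t : T) : Set P := {p | N.Ftp t p}
/-- Transitions producing into a set of places. -/
def preS (N : Net P T) (S : Set P) : Set T := {t | ∃ p ∈ S, N.Ftp t p}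
/-- Transitions consuming from a set of places. -/
def postS (N : Net P T) (S : Set P) : Set T := {t | ∃ p ∈ S, N.Fpt p t}
/-- A trap: every transition consuming from `Q` produces into `Q`. -/
def isTrap (N : Net P T) (Q : Set P) : Prop := N.postS Q ⊆ N.preS Q
/-- A siphon: every transition producing into `S` consumes from `S`. -/
def isSiphon (N : Net P T) (S : Set P) : Prop := N.preS S ⊆ N.postS S
/-- The maximal trap contained in `S`: union of all traps inside `S`. -/
def maxTrap (N : Net P T) (S : Set P) : Set P := ⋃₀ {Q | N.isTrap Q ∧ Q ⊆ S}
/-- Free choice: input-sharing transitions have equal presets. -/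
def freeChoice (N : Net P T) : Prop :=
  ∀ t t' : T, (N.preT t ∩ N.preT t').Nonempty → N.preT t = N.preT t'
/-- `t` is enabled at marking `M`. -/
def enabled (N : Net P T) (t : T) (M : P → ℕ) : Prop := ∀ p ∈ N.preT t, 1 ≤ M p
/-- Firing `t` at `M` yields `M'`. -/
def fires (N : Net P T) (t : T) (M M' : P → ℕ) : Prop :=
  N.enabled t M ∧
    ∀ p, M' p = M p - (if p ∈ N.preT t then 1 else 0) + (if p ∈ N.postT t then 1 else 0)
/-- Reachability: reflexive-transitive closure of single firings. -/
def reach (N : Net P T) : (P → ℕ) → (P → ℕ) → Prop :=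
  Relation.ReflTransGen (fun M M' => ∃ t, N.fires t M M')
/-- Firing a whole sequence of transitions. -/
def firesList (N : Net P T) : List T → (P → ℕ) → (P → ℕ) → Prop
  | [], M, M' => M' = M
  | t :: σ, M, M' => ∃ M₁, N.fires t M M₁ ∧ N.firesList σ M₁ M'
/-- `t` is dead at `M`: no reachable marking enables it. -/
def dead (N : Net P T) (t : T) (M : P → ℕ) : Prop :=
  ∀ M', N.reach M M' → ¬ N.enabled t M'
/-- `t` is live at `M`: it is dead at no reachable marking. -/
def live (N : Net P T) (t : T) (M : P → ℕ) : Prop :=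
  ∀ M', N.reach M M' → ¬ N.dead t M'

end Net

/-- from any marking one can reach a marking where every transition
is dead or live. -/
lemma Net.dead_mono {P T : Type} (N : Net P T) {t : T} {M M' : P → ℕ}
    (h : N.reach M M') (hd : N.dead t M) : N.dead t M' :=
  fun M'' h' => hd M'' (h.trans h')

theorem exists_reach_dead_or_live {P T : Type} [Fintype T] (N : Net P T) (M : P → ℕ) :
    ∃ M', N.reach M M' ∧ ∀ t : T, N.dead t M' ∨ N.live t M' := by
  classical
  let f : (P → ℕ) → ℕ := fun M' => (Finset.univ.filter (fun t => N.dead t M')).card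
  suffices h : ∀ k (M : P → ℕ), Fintype.card T - f M ≤ k →
      ∃ M', N.reach M M' ∧ ∀ t : T, N.dead t M' ∨ N.live t M' from h _ M le_rfl
  intro k
  induction k with
  | zero =>
    intro M hM
    refine ⟨M, Relation.ReflTransGen.refl, fun t => Or.inl ?_⟩
    have hle : f M ≤ Fintype.card T := Finset.card_le_univ _
    have hge : Fintype.card T ≤ f M := by omega
    have heq : (Finset.univ.filter (fun t => N.dead t M)) = Finset.univ :=
      Finset.eq_univ_of_card _ (le_antisymm hle hge)
    have := heq ▸ (Finset.mem_univ t)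
    exact (Finset.mem_filter.mp this).2
  | succ k ih =>
    intro M hM
    by_cases hall : ∀ t : T, N.dead t M ∨ N.live t M
    · exact ⟨M, Relation.ReflTransGen.refl, hall⟩
    · push_neg at hall
      obtain ⟨t, hnd, hnl⟩ := hall
      have : ∃ M₁, N.reach M M₁ ∧ N.dead t M₁ := by
        by_contra hc
        push_neg at hc
        exact hnl (fun M' hr => hc M' hr)
      obtain ⟨M₁, hr1, hd1⟩ := this
      have hsub : (Finset.univ.filter (fun s => N.dead s M)) ⊂
          (Finset.univ.filter (fun s => N.dead s M₁)) := by
        constructor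
        · intro s hs
          simp only [Finset.mem_filter, Finset.mem_univ, true_and] at hs ⊢
          exact N.dead_mono hr1 hs
        · intro hcon
          have ht : t ∈ (Finset.univ.filter (fun s => N.dead s M₁)) := by
            simp [hd1]
          have := hcon ht
          simp only [Finset.mem_filter, Finset.mem_univ, true_and] at this
          exact hnd this
      have hlt : f M < f M₁ := Finset.card_lt_card hsub
      obtain ⟨M', hr2, hgood⟩ := ih M₁ (by omega)
      exact ⟨M', hr1.trans hr2, hgood⟩
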